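/- Let X be a subshift over an alphabet 𝒜 and R a commutative unital ring. Then there exists an isomorphism of R-algebras Φ : D̃_R(X) → Lc(𝒰̂, R) such that Φ(1_A) = 1_{O_A} for every A ∈ 𝒰 (in particular, 1_A ∈ D̃_R(X) for every A ∈ 𝒰). -/

import Mathlib

open Set

section Subshift

variable {A : Type*}

/-- The word `w` occurs as a block of `x` at position `i`. -/
def IsBlockAt (x : ℕ → A) (w : List A) (i : ℕ) : Prop :=
  ∀ j, ∀ _ : j < w.length, x (i + j) = w[j]

/-- The subshift `X_F ⊆ 𝒜^ℕ` determined by the set `F` of forbidden words. -/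
def SubshiftOf (F : Set (List A)) : Set (ℕ → A) :=
  {x | ∀ w ∈ F, ∀ i, ¬ IsBlockAt x w i}

/-- The language of the subshift: all finite words occurring in some element of `X_F`. -/
def Lang (F : Set (List A)) : Set (List A) :=
  {w | ∃ x ∈ SubshiftOf F, ∃ i, IsBlockAt x w i}

/-- Concatenation of a finite word with an infinite sequence. -/
def wcat (w : List A) (x : ℕ → A) : ℕ → A := fun n =>
  if h : n < w.length then w[n] else x (n - w.length)

/-- `C(α,β) = {β x ∈ X : α x ∈ X}`. -/
def Cset (F : Set (List A)) (α β : List A) : Set (ℕ → A) :=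
  {y | ∃ x : ℕ → A, y = wcat β x ∧ wcat β x ∈ SubshiftOf F ∧ wcat α x ∈ SubshiftOf F}

/-- The cylinder set `Z_β = C(ω,β)`. -/
def Zcyl (F : Set (List A)) (β : List A) : Set (ℕ → A) := Cset F [] β

/-- The follower set `F_α = C(α,ω)`. -/
def Fol (F : Set (List A)) (α : List A) : Set (ℕ → A) := Cset F α []

/-- The relative range `r(S,w) = {x ∈ X : w x ∈ S}`. -/
def relRange (F : Set (List A)) (S : Set (ℕ → A)) (w : List A) : Set (ℕ → A) :=
  {x | x ∈ SubshiftOf F ∧ wcat w x ∈ S}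

/-- Membership in the Boolean algebra `𝒰` of subsets of `X` generated by the sets
`C(α,β)`, `α, β ∈ L_X`: closed under finite unions, finite intersections and
complements in `X`. -/
inductive InU (F : Set (List A)) : Set (ℕ → A) → Prop
  | base {α β : List A} (hα : α ∈ Lang F) (hβ : β ∈ Lang F) : InU F (Cset F α β)
  | union {S T : Set (ℕ → A)} : InU F S → InU F T → InU F (S ∪ T)
  | inter {S T : Set (ℕ → A)} : InU F S → InU F T → InU F (S ∩ T)
  | compl {S : Set (ℕ → A)} : InU F S → InU F (SubshiftOf F \ S)

/-- `αβ⁻¹` is in reduced form in the free group on the alphabet: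
`α` and `β` do not end in the same letter. -/
def ReducedPair (α β : List A) : Prop :=
  ¬ ∃ c : A, α.getLast? = some c ∧ β.getLast? = some c

/-- Ultrafilters (= prime filters) of the Boolean algebra `𝒰`. -/
structure UltraU (F : Set (List A)) where
  sets : Set (Set (ℕ → A))
  mem_inU : ∀ S ∈ sets, InU F S
  nonempty : sets.Nonempty
  empty_not_mem : ∅ ∉ sets
  inter_mem : ∀ S ∈ sets, ∀ T ∈ sets, S ∩ T ∈ sets
  superset_mem : ∀ S ∈ sets, ∀ T : Set (ℕ → A), InU F T → S ⊆ T → T ∈ sets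
  prime : ∀ S T : Set (ℕ → A), InU F S → InU F T → S ∪ T ∈ sets → S ∈ sets ∨ T ∈ sets

/-- The basic (compact) open set `O_S = {ξ ∈ 𝒰̂ : S ∈ ξ}` of the Stone dual `𝒰̂`. -/
def Oset (F : Set (List A)) (S : Set (ℕ → A)) : Set (UltraU F) := {ξ | S ∈ ξ.sets}

/-- The Stone topology on `𝒰̂`. -/
instance (F : Set (List A)) : TopologicalSpace (UltraU F) :=
  TopologicalSpace.generateFrom {V | ∃ S : Set (ℕ → A), InU F S ∧ V = Oset F S}

/-- The graph of the partially defined map `σ̂` on `𝒰̂`: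
`sigmaHatRel F ξ η` holds iff `ξ ∈ dom σ̂` and `η = σ̂(ξ)`. -/
def sigmaHatRel (F : Set (List A)) (ξ η : UltraU F) : Prop :=
  ∃ a : A, Zcyl F [a] ∈ ξ.sets ∧
    η.sets = {B : Set (ℕ → A) | InU F B ∧ ∃ S ∈ ξ.sets, relRange F S [a] ⊆ B}

/- The OTW subshift, modelled inside `ℕ → Option A`; a finite word corresponds to a
sequence that is eventually `none` (`none` playing the role of the symbol `∞`). -/

/-- The shift map, deleting the first letter (it sends sequences of length `≤ 1`
to the empty sequence). -/
def shiftO (y : ℕ → Option A) : ℕ → Option A := fun i => y (i + 1)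

/-- An infinite sequence, as an element of the OTW model. -/
def ofSeq (x : ℕ → A) : ℕ → Option A := fun i => some (x i)

/-- A finite word, as an element of the OTW model. -/
def ofWord (w : List A) : ℕ → Option A := fun i =>
  if h : i < w.length then some w[i] else none

/-- Concatenation of a finite word with an element of the OTW model. -/
def wcatO (w : List A) (y : ℕ → Option A) : ℕ → Option A := fun n =>
  if h : n < w.length then some w[n] else y (n - w.length)

/-- The finite words belonging to `X^fin`: those `w` for which there are infinitely many
letters `a` such that `w a y ∈ X^inf` for some `y`. -/
def XFin (F : Set (List A)) : Set (List A) :=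
  {w | {a : A | ∃ y : ℕ → A, wcat (w ++ [a]) y ∈ SubshiftOf F}.Infinite}

/-- The OTW subshift `X^OTW = X^inf ∪ X^fin`. -/
def OTW (F : Set (List A)) : Set (ℕ → Option A) :=
  ofSeq '' SubshiftOf F ∪ ofWord '' XFin F

theorem ofSeq_mem_OTW {F : Set (List A)} {x : ℕ → A} (hx : x ∈ SubshiftOf F) :
    ofSeq x ∈ OTW F := Or.inl ⟨x, hx, rfl⟩

theorem ofWord_mem_OTW {F : Set (List A)} {w : List A} (hw : w ∈ XFin F) :
    ofWord w ∈ OTW F := Or.inr ⟨w, hw, rfl⟩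

/-- The generalised cylinder `𝒵(w,F') = {y ∈ X^OTW : y` begins with `w`, and the next
letter of `y` is not in `F'}`. -/
def genCyl (F : Set (List A)) (w : List A) (F' : Set A) : Set (ℕ → Option A) :=
  {y | y ∈ OTW F ∧ (∀ j, ∀ _ : j < w.length, y j = some w[j]) ∧
    ∀ a ∈ F', y w.length ≠ some a}

/-- The follower set `ℱ(w) = {y ∈ X^OTW : w y ∈ X^OTW}` in the OTW subshift. -/
def folO (F : Set (List A)) (w : List A) : Set (ℕ → Option A) :=
  {y | y ∈ OTW F ∧ wcatO w y ∈ OTW F}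

/-- The topology on `X^OTW`, generated by the generalised cylinders. -/
instance (F : Set (List A)) : TopologicalSpace ↥(OTW F) :=
  TopologicalSpace.generateFrom
    {V | ∃ w ∈ Lang F, ∃ F' : Set A, F'.Finite ∧
      V = {y : ↥(OTW F) | (y : ℕ → Option A) ∈ genCyl F w F'}}

/-- The graph of the map `π : 𝒰̂ → X^OTW`: `piRel F ξ y` holds iff `π(ξ) = y`.
(`y` begins with a nonempty word `w` iff `Z_w ∈ ξ`.) -/
def piRel (F : Set (List A)) (ξ : UltraU F) (y : ℕ → Option A) : Prop :=
  (∀ i, y i = none → y (i + 1) = none) ∧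
  ∀ w : List A, w ≠ [] →
    ((∀ j, ∀ _ : j < w.length, y j = some w[j]) ↔ Zcyl F w ∈ ξ.sets)

end Subshift

section Conjugacy

variable {A₁ A₂ : Type*}

/-- `h` commutes with the shift maps. -/
def ShiftCommuting (F₁ : Set (List A₁)) (F₂ : Set (List A₂))
    (h : ↥(OTW F₁) → ↥(OTW F₂)) : Prop :=
  ∀ (y : ↥(OTW F₁)) (hy : shiftO (y : ℕ → Option A₁) ∈ OTW F₁),
    (h ⟨shiftO (y : ℕ → Option A₁), hy⟩ : ℕ → Option A₂) =
      shiftO ((h y : ℕ → Option A₂))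

/-- `h` is length-preserving: `h y` and `y` have the same length, i.e. the same
positions where the symbol `∞` (here `none`) occurs. -/
def LengthPreserving (F₁ : Set (List A₁)) (F₂ : Set (List A₂))
    (h : ↥(OTW F₁) → ↥(OTW F₂)) : Prop :=
  ∀ (y : ↥(OTW F₁)) (i : ℕ),
    ((h y : ℕ → Option A₂) i = none ↔ (y : ℕ → Option A₁) i = none)

/-- A conjugacy of OTW subshifts: a homeomorphism commuting with the shifts and
preserving lengths. -/
def IsConjugacy (F₁ : Set (List A₁)) (F₂ : Set (List A₂))
    (h : ↥(OTW F₁) ≃ₜ ↥(OTW F₂)) : Prop :=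
  ShiftCommuting F₁ F₂ ⇑h ∧ LengthPreserving F₁ F₂ ⇑h

/-- The image `h̄(S) = h(S)` of a subset `S ⊆ X₁` under (the restriction to `X₁` of)
a map `h : X₁^OTW → X₂^OTW`. -/
def hbar (F₁ : Set (List A₁)) (F₂ : Set (List A₂))
    (h : ↥(OTW F₁) → ↥(OTW F₂)) (S : Set (ℕ → A₁)) : Set (ℕ → A₂) :=
  {z | ∃ y : ↥(OTW F₁), (y : ℕ → Option A₁) ∈ ofSeq '' S ∧
    ofSeq z = (h y : ℕ → Option A₂)}

end Conjugacy

/-- The characteristic function `1_S : X → R` of a subset `S` of the subshift. -/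
noncomputable def chi {A : Type*} (F : Set (List A)) (R : Type*) [CommRing R]
    (S : Set (ℕ → A)) : ↥(SubshiftOf F) → R :=
  Set.indicator {x : ↥(SubshiftOf F) | (x : ℕ → A) ∈ S} fun _ => 1

/-- The (possibly non-unital) `R`-algebra `Lc(Y,R)` of locally constant compactly
supported functions `Y → R`, as a non-unital subalgebra of `Y → R`. -/
def LcSub (R : Type*) [CommRing R] (Y : Type*) [TopologicalSpace Y] :
    NonUnitalSubalgebra R (Y → R) where
  carrier := {f : Y → R | IsLocallyConstant f ∧ HasCompactSupport f}
  add_mem' := fun hf hg => ⟨hf.1.comp₂ hg.1 (· + ·), hf.2.add hg.2⟩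
  zero_mem' := by
    refine ⟨IsLocallyConstant.const 0, ?_⟩
    rw [hasCompactSupport_def]
    simp
  mul_mem' := fun hf hg => ⟨hf.1.comp₂ hg.1 (· * ·), hf.2.mul_right⟩
  smul_mem' := fun c f hf =>
    ⟨hf.1.comp fun y => c • y, hf.2.mono (Function.support_const_smul_subset c f)⟩

/-- The algebra `D̃_R(X)`: the `R`-subalgebra of the functions `X → R` generated by the
characteristic functions `1_{C(α,β)}`, `α, β ∈ L_X`. -/
noncomputable def DRsub {A : Type*} (F : Set (List A)) (R : Type*) [CommRing R] :
    NonUnitalSubalgebra R (↥(SubshiftOf F) → R) :=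
  NonUnitalAlgebra.adjoin R
    {f : ↥(SubshiftOf F) → R | ∃ α ∈ Lang F, ∃ β ∈ Lang F, f = chi F R (Cset F α β)}

section StoneAux

variable {A : Type*} {F : Set (List A)}

theorem wcat_nil (x : ℕ → A) : wcat [] x = x := by
  funext n; simp [wcat]

theorem Cset_nil_nil : Cset F [] [] = SubshiftOf F := by
  ext y
  constructor
  · rintro ⟨x, rfl, hx, -⟩; exact hx
  · intro hy
    exact ⟨y, (wcat_nil y).symm, by rwa [wcat_nil], by rwa [wcat_nil]⟩

theorem InU_subset {S : Set (ℕ → A)} (h : InU F S) : S ⊆ SubshiftOf F := by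
  induction h with
  | base hα hβ => rintro y ⟨x, rfl, hx, -⟩; exact hx
  | union _ _ ih1 ih2 => exact Set.union_subset ih1 ih2
  | inter _ _ ih1 _ => exact fun y hy => ih1 hy.1
  | compl _ _ => exact Set.diff_subset

theorem nil_mem_lang {x : ℕ → A} (hx : x ∈ SubshiftOf F) : ([] : List A) ∈ Lang F :=
  ⟨x, hx, 0, fun j hj => absurd hj (by simp)⟩

theorem nil_mem_lang_of_inU {S : Set (ℕ → A)} (h : InU F S) : ([] : List A) ∈ Lang F := by
  induction h with
  | base hα hβ => obtain ⟨x, hx, -⟩ := hα; exact nil_mem_lang hx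
  | union _ _ ih1 _ => exact ih1
  | inter _ _ ih1 _ => exact ih1
  | compl _ ih => exact ih

theorem InU_top (h : ([] : List A) ∈ Lang F) : InU F (SubshiftOf F) := by
  rw [← Cset_nil_nil]; exact InU.base h h

theorem nonempty_of_mem_ultra {ξ : UltraU F} {S : Set (ℕ → A)} (h : S ∈ ξ.sets) :
    S.Nonempty := by
  rw [Set.nonempty_iff_ne_empty]; rintro rfl; exact ξ.empty_not_mem h

theorem top_mem_ultra (ξ : UltraU F) : SubshiftOf F ∈ ξ.sets := by
  obtain ⟨S₀, hS₀⟩ := ξ.nonempty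
  have h := ξ.mem_inU S₀ hS₀
  exact ξ.superset_mem S₀ hS₀ _ (InU_top (nil_mem_lang_of_inU h)) (InU_subset h)

theorem InU_empty_of_ultra (ξ : UltraU F) : InU F (∅ : Set (ℕ → A)) := by
  obtain ⟨S₀, hS₀⟩ := ξ.nonempty
  have h := ξ.mem_inU S₀ hS₀
  have hX : InU F (SubshiftOf F) := InU_top (nil_mem_lang_of_inU h)
  have h2 := hX.compl
  rwa [Set.diff_self] at h2

theorem mem_Oset {S : Set (ℕ → A)} {ξ : UltraU F} : ξ ∈ Oset F S ↔ S ∈ ξ.sets := Iff.rfl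

theorem Oset_inter {S T : Set (ℕ → A)} (hS : InU F S) (hT : InU F T) :
    Oset F (S ∩ T) = Oset F S ∩ Oset F T := by
  ext ξ
  constructor
  · intro h
    exact ⟨ξ.superset_mem _ h _ hS Set.inter_subset_left,
      ξ.superset_mem _ h _ hT Set.inter_subset_right⟩
  · rintro ⟨h1, h2⟩; exact ξ.inter_mem _ h1 _ h2

theorem Oset_union {S T : Set (ℕ → A)} (hS : InU F S) (hT : InU F T) :
    Oset F (S ∪ T) = Oset F S ∪ Oset F T := by
  ext ξ
  constructor
  · intro h; exact ξ.prime S T hS hT h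
  · rintro (h | h)
    · exact ξ.superset_mem _ h _ (hS.union hT) Set.subset_union_left
    · exact ξ.superset_mem _ h _ (hS.union hT) Set.subset_union_right

theorem Oset_diff {S : Set (ℕ → A)} (hS : InU F S) :
    Oset F (SubshiftOf F \ S) = (Oset F S)ᶜ := by
  ext ξ
  simp only [mem_Oset, Set.mem_compl_iff]
  constructor
  · intro h hS'
    have h2 := ξ.inter_mem _ hS' _ h
    rw [Set.inter_diff_self] at h2
    exact ξ.empty_not_mem h2
  · intro h
    have hX := top_mem_ultra ξ
    have hcup : S ∪ SubshiftOf F \ S = SubshiftOf F := Set.union_diff_cancel (InU_subset hS)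
    have h3 := ξ.prime S _ hS hS.compl (by rwa [hcup])
    exact h3.resolve_left h

theorem Oset_empty : Oset F (∅ : Set (ℕ → A)) = ∅ := by
  ext ξ; simp only [mem_Oset, Set.mem_empty_iff_false, iff_false]
  exact ξ.empty_not_mem

theorem isOpen_Oset {S : Set (ℕ → A)} (hS : InU F S) : IsOpen (Oset F S) :=
  TopologicalSpace.isOpen_generateFrom_of_mem ⟨S, hS, rfl⟩

theorem exists_basic {V : Set (UltraU F)} (hV : IsOpen V) :
    ∀ ξ ∈ V, ∃ T, InU F T ∧ T ∈ ξ.sets ∧ Oset F T ⊆ V := by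
  have hV' : TopologicalSpace.GenerateOpen
      {V : Set (UltraU F) | ∃ S : Set (ℕ → A), InU F S ∧ V = Oset F S} V := hV
  clear hV
  induction hV' with
  | basic W hW =>
    intro ξ hξ
    obtain ⟨S, hS, rfl⟩ := hW
    exact ⟨S, hS, hξ, subset_rfl⟩
  | univ =>
    intro ξ _
    obtain ⟨S₀, h₀⟩ := ξ.nonempty
    exact ⟨S₀, ξ.mem_inU _ h₀, h₀, Set.subset_univ _⟩
  | inter _ _ _ _ ih1 ih2 =>
    rintro ξ ⟨h1, h2⟩
    obtain ⟨T₁, hT₁, hm₁, hs₁⟩ := ih1 ξ h1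
    obtain ⟨T₂, hT₂, hm₂, hs₂⟩ := ih2 ξ h2
    refine ⟨T₁ ∩ T₂, hT₁.inter hT₂, ξ.inter_mem _ hm₁ _ hm₂, ?_⟩
    rw [Oset_inter hT₁ hT₂]
    exact fun η hη => ⟨hs₁ hη.1, hs₂ hη.2⟩
  | sUnion _ _ ih =>
    rintro ξ ⟨W, hW, hξ⟩
    obtain ⟨T, h1, h2, h3⟩ := ih W hW ξ hξ
    exact ⟨T, h1, h2, h3.trans (Set.subset_sUnion_of_mem hW)⟩

/-- Ultrafilter of `𝒰` induced by a set-theoretic ultrafilter. -/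
def mkUltra (F : Set (List A)) (𝔘 : Ultrafilter (ℕ → A)) {S : Set (ℕ → A)}
    (hS : InU F S) (hSU : S ∈ 𝔘) : UltraU F where
  sets := {B | InU F B ∧ B ∈ 𝔘}
  mem_inU := fun _ h => h.1
  nonempty := ⟨S, hS, hSU⟩
  empty_not_mem := fun h => Ultrafilter.empty_notMem h.2
  inter_mem := fun B hB C hC => ⟨hB.1.inter hC.1, Filter.inter_mem hB.2 hC.2⟩
  superset_mem := fun B hB C hC hBC => ⟨hC, Filter.mem_of_superset hB.2 hBC⟩
  prime := fun B C hB hC h =>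
    (Ultrafilter.union_mem_iff.mp h.2).imp (fun h' => ⟨hB, h'⟩) (fun h' => ⟨hC, h'⟩)

theorem InU_biUnion {ι : Type*} (ξ₀ : UltraU F) (t : Finset ι) (T : ι → Set (ℕ → A))
    (h : ∀ i, InU F (T i)) : InU F (⋃ i ∈ t, T i) := by
  classical
  induction t using Finset.induction_on with
  | empty => simpa using InU_empty_of_ultra ξ₀
  | insert _ _ hnot ih =>
    rw [Finset.set_biUnion_insert]
    exact (h _).union ih

theorem Oset_biUnion {ι : Type*} (ξ₀ : UltraU F) (t : Finset ι) (T : ι → Set (ℕ → A))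
    (h : ∀ i, InU F (T i)) : Oset F (⋃ i ∈ t, T i) = ⋃ i ∈ t, Oset F (T i) := by
  classical
  induction t using Finset.induction_on with
  | empty => simpa using Oset_empty
  | @insert a s hnot ih =>
    rw [Finset.set_biUnion_insert, Oset_union (h a) (InU_biUnion ξ₀ s T h), ih,
      Finset.set_biUnion_insert]

theorem InU_inter_biInter_diff {ι : Type*} (t : Finset ι) {S : Set (ℕ → A)} (hS : InU F S)
    (T : ι → Set (ℕ → A)) (h : ∀ i, InU F (T i)) :
    InU F (S ∩ ⋂ i ∈ t, (SubshiftOf F \ T i)) := by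
  classical
  induction t using Finset.induction_on with
  | empty => simpa using hS
  | @insert a s hnot ih =>
    have heq : S ∩ ⋂ i ∈ insert a s, (SubshiftOf F \ T i)
        = (S ∩ ⋂ i ∈ s, (SubshiftOf F \ T i)) ∩ (SubshiftOf F \ T a) := by
      rw [Finset.set_biInter_insert]
      ext x; simp only [Set.mem_inter_iff, Set.mem_iInter]; tauto
    rw [heq]
    exact ih.inter (h a).compl

theorem Oset_inter_biInter_diff {ι : Type*} (t : Finset ι) {S : Set (ℕ → A)} (hS : InU F S)
    (T : ι → Set (ℕ → A)) (h : ∀ i, InU F (T i)) :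
    Oset F (S ∩ ⋂ i ∈ t, (SubshiftOf F \ T i)) = Oset F S \ ⋃ i ∈ t, Oset F (T i) := by
  classical
  induction t using Finset.induction_on with
  | empty => simp
  | @insert a s hnot ih =>
    have heq : S ∩ ⋂ i ∈ insert a s, (SubshiftOf F \ T i)
        = (S ∩ ⋂ i ∈ s, (SubshiftOf F \ T i)) ∩ (SubshiftOf F \ T a) := by
      rw [Finset.set_biInter_insert]
      ext x; simp only [Set.mem_inter_iff, Set.mem_iInter]; tauto
    rw [heq, Oset_inter (InU_inter_biInter_diff s hS T h) (h a).compl, ih, Oset_diff (h a),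
      Finset.set_biUnion_insert]
    ext ξ; simp only [Set.mem_inter_iff, Set.mem_diff, Set.mem_compl_iff, Set.mem_union]; tauto

theorem isCompact_Oset {S : Set (ℕ → A)} (hS : InU F S) : IsCompact (Oset F S) := by
  classical
  refine isCompact_of_finite_subcover fun {ι} U hUo hcov => ?_
  by_contra hnc
  push_neg at hnc
  have hOne : (Oset F S).Nonempty := by
    rcases (Oset F S).eq_empty_or_nonempty with h | h
    · exact absurd (by simp [h] : Oset F S ⊆ ⋃ i ∈ (∅ : Finset ι), U i) (hnc ∅)
    · exact h
  obtain ⟨ξone, hξone⟩ := hOne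
  have hpt : ∀ ξ : Oset F S, ∃ (i : ι) (T : Set (ℕ → A)),
      InU F T ∧ T ∈ (ξ : UltraU F).sets ∧ Oset F T ⊆ U i := by
    intro ξ
    obtain ⟨i, hi⟩ := Set.mem_iUnion.mp (hcov ξ.2)
    obtain ⟨T, h1, h2, h3⟩ := exists_basic (hUo i) ξ hi
    exact ⟨i, T, h1, h2, h3⟩
  choose idx T hT1 hT2 hT3 using hpt
  have claim : ∀ t : Finset (Oset F S),
      (S ∩ ⋂ ξ ∈ t, (SubshiftOf F \ T ξ)).Nonempty := by
    intro t
    rcases (S ∩ ⋂ ξ ∈ t, (SubshiftOf F \ T ξ)).eq_empty_or_nonempty with he | h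
    · exfalso
      have hO : Oset F S \ ⋃ ξ ∈ t, Oset F (T ξ) = ∅ := by
        rw [← Oset_inter_biInter_diff t hS T hT1, he, Oset_empty]
      have hsub : Oset F S ⊆ ⋃ i ∈ t.image idx, U i := by
        intro η hη
        have hmem : η ∈ ⋃ ξ ∈ t, Oset F (T ξ) := by
          by_contra hn
          have : η ∈ Oset F S \ ⋃ ξ ∈ t, Oset F (T ξ) := ⟨hη, hn⟩
          rw [hO] at this
          exact this
        obtain ⟨ξ', hξ't, hmem'⟩ := by
          simpa only [Set.mem_iUnion, exists_prop] using hmem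
        exact Set.mem_biUnion (Finset.mem_image_of_mem idx hξ't) (hT3 ξ' hmem')
      exact hnc _ hsub
    · exact h
  have hcond : ∀ t : Finset (Set (ℕ → A)),
      (↑t : Set (Set (ℕ → A))) ⊆ insert S (Set.range fun ξ : Oset F S => SubshiftOf F \ T ξ) →
      (⋂₀ (↑t : Set (Set (ℕ → A)))).Nonempty := by
    intro t ht
    have hch : ∀ u : {u // u ∈ t}, ∃ ξ : Oset F S,
        u.1 = S ∨ u.1 = SubshiftOf F \ T ξ := by
      intro u
      rcases ht u.2 with h | h
      · exact ⟨⟨ξone, hξone⟩, Or.inl h⟩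
      · obtain ⟨ξ, hξ⟩ := h
        exact ⟨ξ, Or.inr hξ.symm⟩
    choose k hk using hch
    obtain ⟨x, hxS, hxI⟩ := claim (t.attach.image k)
    refine ⟨x, ?_⟩
    intro u hu
    rcases hk ⟨u, hu⟩ with h | h
    · exact (show u = S from h) ▸ hxS
    · have h' : u = SubshiftOf F \ T (k ⟨u, hu⟩) := h
      rw [h']
      have hmem : k ⟨u, hu⟩ ∈ t.attach.image k :=
        Finset.mem_image_of_mem k (Finset.mem_attach t ⟨u, hu⟩)
      exact Set.mem_iInter₂.mp hxI _ hmem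
  obtain ⟨𝔘, h𝔘⟩ := Ultrafilter.exists_ultrafilter_of_finite_inter_nonempty
      (insert S (Set.range fun ξ : Oset F S => SubshiftOf F \ T ξ)) hcond
  have hSU : S ∈ 𝔘 := h𝔘 (Set.mem_insert _ _)
  set ξs := mkUltra F 𝔘 hS hSU with hξs
  have hξmem : ξs ∈ Oset F S := ⟨hS, hSU⟩
  have h1 : T ⟨ξs, hξmem⟩ ∈ 𝔘 := (hT2 ⟨ξs, hξmem⟩).2
  have h2 : SubshiftOf F \ T ⟨ξs, hξmem⟩ ∈ 𝔘 :=
    h𝔘 (Set.mem_insert_of_mem _ ⟨⟨ξs, hξmem⟩, rfl⟩)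
  have h3 := Filter.inter_mem h1 h2
  rw [Set.inter_diff_self] at h3
  exact Ultrafilter.empty_notMem h3

theorem isClopen_Oset {S : Set (ℕ → A)} (hS : InU F S) : IsClopen (Oset F S) := by
  constructor
  · rw [← isOpen_compl_iff, ← Oset_diff hS]
    exact isOpen_Oset hS.compl
  · exact isOpen_Oset hS

theorem exists_Oset (ξ₀ : UltraU F) {U : Set (UltraU F)} (ho : IsOpen U) (hc : IsCompact U) :
    ∃ T, InU F T ∧ Oset F T = U := by
  classical
  have hp : ∀ ξ : U, ∃ T, InU F T ∧ T ∈ (ξ : UltraU F).sets ∧ Oset F T ⊆ U :=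
    fun ξ => exists_basic ho ξ ξ.2
  choose T h1 h2 h3 using hp
  have cover : U ⊆ ⋃ ξ : U, Oset F (T ξ) := fun η hη => Set.mem_iUnion.2 ⟨⟨η, hη⟩, h2 ⟨η, hη⟩⟩
  obtain ⟨t, ht⟩ := hc.elim_finite_subcover _ (fun ξ => isOpen_Oset (h1 ξ)) cover
  refine ⟨⋃ ξ ∈ t, T ξ, InU_biUnion ξ₀ t T h1, ?_⟩
  rw [Oset_biUnion ξ₀ t T h1]
  apply Set.Subset.antisymm
  · intro η hη
    obtain ⟨ξ', hξ't, hmem⟩ := by simpa only [Set.mem_iUnion, exists_prop] using hη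
    exact h3 ξ' hmem
  · exact ht

end StoneAux

section StoneAlg

variable {A : Type*} {F : Set (List A)} (R : Type*) [CommRing R]

theorem chi_pos {S : Set (ℕ → A)} {x : ↥(SubshiftOf F)} (h : (x : ℕ → A) ∈ S) :
    chi F R S x = 1 :=
  Set.indicator_of_mem (show x ∈ {y : ↥(SubshiftOf F) | (y : ℕ → A) ∈ S} from h) _

theorem chi_neg {S : Set (ℕ → A)} {x : ↥(SubshiftOf F)} (h : (x : ℕ → A) ∉ S) :
    chi F R S x = 0 :=
  Set.indicator_of_notMem (show x ∉ {y : ↥(SubshiftOf F) | (y : ℕ → A) ∈ S} from h) _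

theorem chi_inter (S T : Set (ℕ → A)) :
    chi F R (S ∩ T) = chi F R S * chi F R T := by
  funext x
  rw [Pi.mul_apply]
  by_cases h1 : (x : ℕ → A) ∈ S
  · by_cases h2 : (x : ℕ → A) ∈ T
    · rw [chi_pos R (show (x : ℕ → A) ∈ S ∩ T from ⟨h1, h2⟩), chi_pos R h1, chi_pos R h2, one_mul]
    · rw [chi_neg R (show (x : ℕ → A) ∉ S ∩ T from fun hc => h2 hc.2), chi_neg R h2, mul_zero]
  · rw [chi_neg R (show (x : ℕ → A) ∉ S ∩ T from fun hc => h1 hc.1), chi_neg R h1, zero_mul]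

theorem chi_union (S T : Set (ℕ → A)) :
    chi F R (S ∪ T) = chi F R S + chi F R T - chi F R S * chi F R T := by
  funext x
  rw [Pi.sub_apply, Pi.add_apply, Pi.mul_apply]
  by_cases h1 : (x : ℕ → A) ∈ S
  · by_cases h2 : (x : ℕ → A) ∈ T
    · rw [chi_pos R (show (x : ℕ → A) ∈ S ∪ T from Or.inl h1), chi_pos R h1, chi_pos R h2]; ring
    · rw [chi_pos R (show (x : ℕ → A) ∈ S ∪ T from Or.inl h1), chi_pos R h1, chi_neg R h2]; ring
  · by_cases h2 : (x : ℕ → A) ∈ T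
    · rw [chi_pos R (show (x : ℕ → A) ∈ S ∪ T from Or.inr h2), chi_neg R h1, chi_pos R h2]; ring
    · rw [chi_neg R (show (x : ℕ → A) ∉ S ∪ T from fun hc => hc.elim h1 h2), chi_neg R h1, chi_neg R h2]; ring

theorem chi_diff (S : Set (ℕ → A)) :
    chi F R (SubshiftOf F \ S) = chi F R (SubshiftOf F) - chi F R S := by
  funext x
  rw [Pi.sub_apply]
  by_cases h : (x : ℕ → A) ∈ S
  · rw [chi_neg R (show (x : ℕ → A) ∉ SubshiftOf F \ S from fun hc => hc.2 h), chi_pos R x.2, chi_pos R h]; ring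
  · rw [chi_pos R (show (x : ℕ → A) ∈ SubshiftOf F \ S from ⟨x.2, h⟩), chi_pos R x.2, chi_neg R h]; ring

theorem chi_mem {S : Set (ℕ → A)} (hS : InU F S) : chi F R S ∈ DRsub F R := by
  induction hS with
  | @base α β hα hβ =>
    exact NonUnitalAlgebra.subset_adjoin R ⟨α, hα, β, hβ, rfl⟩
  | union h1 h2 ih1 ih2 =>
    rw [chi_union]
    exact sub_mem (add_mem ih1 ih2) (mul_mem ih1 ih2)
  | inter h1 h2 ih1 ih2 =>
    rw [chi_inter]
    exact mul_mem ih1 ih2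
  | compl h ih =>
    rw [chi_diff]
    have htop : chi F R (Cset F [] []) ∈ DRsub F R :=
      NonUnitalAlgebra.subset_adjoin R
        ⟨[], nil_mem_lang_of_inU h, [], nil_mem_lang_of_inU h, rfl⟩
    rw [Cset_nil_nil] at htop
    exact sub_mem htop ih

/-- The principal ultrafilter of `𝒰` at a point of the subshift. -/
def etaU {F : Set (List A)} (x : ↥(SubshiftOf F)) : UltraU F where
  sets := {B | InU F B ∧ (x : ℕ → A) ∈ B}
  mem_inU := fun _ h => h.1
  nonempty := ⟨SubshiftOf F, InU_top (nil_mem_lang x.2), x.2⟩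
  empty_not_mem := fun h => h.2
  inter_mem := fun B hB C hC => ⟨hB.1.inter hC.1, hB.2, hC.2⟩
  superset_mem := fun B hB C hC hBC => ⟨hC, hBC hB.2⟩
  prime := fun B C hB hC h => h.2.imp (fun h' => ⟨hB, h'⟩) (fun h' => ⟨hC, h'⟩)

theorem comp_indicator {S : Set (ℕ → A)} (hS : InU F S) :
    (fun x : ↥(SubshiftOf F) => Set.indicator (Oset F S) (fun _ => (1 : R)) (etaU x))
      = chi F R S := by
  funext x
  by_cases h : (x : ℕ → A) ∈ S
  · rw [Set.indicator_of_mem (show etaU x ∈ Oset F S from ⟨hS, h⟩), chi_pos R h]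
  · rw [Set.indicator_of_notMem (fun hc : etaU x ∈ Oset F S => h hc.2), chi_neg R h]

theorem indicator_mem_LcSub {Y : Type*} [TopologicalSpace Y] {U : Set Y}
    (hU : IsClopen U) (hc : IsCompact U) :
    Set.indicator U (fun _ => (1 : R)) ∈ LcSub R Y := by
  refine ⟨?_, ?_⟩
  · intro s
    by_cases h1 : (1 : R) ∈ s <;> by_cases h0 : (0 : R) ∈ s
    · have he : Set.indicator U (fun _ => (1 : R)) ⁻¹' s = Set.univ := by
        ext y
        simp only [Set.mem_preimage, Set.mem_univ, iff_true]
        by_cases hy : y ∈ U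
        · rw [Set.indicator_of_mem hy]; exact h1
        · rw [Set.indicator_of_notMem hy]; exact h0
      rw [he]; exact isOpen_univ
    · have he : Set.indicator U (fun _ => (1 : R)) ⁻¹' s = U := by
        ext y
        simp only [Set.mem_preimage]
        by_cases hy : y ∈ U
        · rw [Set.indicator_of_mem hy]; simp [hy, h1]
        · rw [Set.indicator_of_notMem hy]; simp [hy, h0]
      rw [he]; exact hU.2
    · have he : Set.indicator U (fun _ => (1 : R)) ⁻¹' s = Uᶜ := by
        ext y
        simp only [Set.mem_preimage, Set.mem_compl_iff]
        by_cases hy : y ∈ U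
        · rw [Set.indicator_of_mem hy]; simp [hy, h1]
        · rw [Set.indicator_of_notMem hy]; simp [hy, h0]
      rw [he]; exact hU.1.isOpen_compl
    · have he : Set.indicator U (fun _ => (1 : R)) ⁻¹' s = ∅ := by
        ext y
        simp only [Set.mem_preimage, Set.mem_empty_iff_false, iff_false]
        by_cases hy : y ∈ U
        · rw [Set.indicator_of_mem hy]; exact h1
        · rw [Set.indicator_of_notMem hy]; exact h0
      rw [he]; exact isOpen_empty
  · exact IsCompact.of_isClosed_subset hc isClosed_closure
      (closure_minimal Set.support_indicator_subset hU.1)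

theorem lc_mem_span (f : UltraU F → R) (hlc : IsLocallyConstant f)
    (hcs : HasCompactSupport f) :
    f ∈ Submodule.span R {g : UltraU F → R |
      ∃ S : Set (ℕ → A), InU F S ∧ g = Set.indicator (Oset F S) (fun _ => (1 : R))} := by
  classical
  by_cases hne : Nonempty (UltraU F)
  · obtain ⟨ξ₀⟩ := hne
    have hK : IsCompact (tsupport f) := hcs
    have cover : tsupport f ⊆ ⋃ r : R, f ⁻¹' {r} := fun ξ _ => Set.mem_iUnion.2 ⟨f ξ, rfl⟩
    obtain ⟨V, hV⟩ := hK.elim_finite_subcover (fun r : R => f ⁻¹' {r})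
      (fun r => hlc _) cover
    have hfib : ∀ r : {r // r ∈ V}, ∃ T : Set (ℕ → A), InU F T ∧
        Oset F T = (if r.1 = 0 then ∅ else f ⁻¹' {r.1}) := by
      intro r
      by_cases h0 : r.1 = 0
      · refine ⟨∅, InU_empty_of_ultra ξ₀, ?_⟩
        rw [if_pos h0, Oset_empty]
      · rw [if_neg h0]
        have hop : IsOpen (f ⁻¹' {r.1}) := hlc _
        have hcl : IsClosed (f ⁻¹' {r.1}) := by
          rw [← isOpen_compl_iff, ← Set.preimage_compl]
          exact hlc _
        have hsub : f ⁻¹' {r.1} ⊆ tsupport f := by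
          intro ξ hξ
          apply subset_tsupport
          simp only [Function.mem_support]
          rw [Set.mem_preimage, Set.mem_singleton_iff] at hξ
          rw [hξ]; exact h0
        exact exists_Oset ξ₀ hop (IsCompact.of_isClosed_subset hK hcl hsub)
    choose T hT1 hT2 using hfib
    have hrepr : f = ∑ r ∈ V.attach,
        r.1 • Set.indicator (Oset F (T r)) (fun _ => (1 : R)) := by
      funext ξ
      have hterm : ∀ r : {r // r ∈ V},
          (r.1 • Set.indicator (Oset F (T r)) (fun _ => (1 : R))) ξ
            = if f ξ = r.1 then r.1 else 0 := by
        intro r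
        rw [Pi.smul_apply]
        by_cases h0 : r.1 = 0
        · rw [h0]
          simp
        · rw [hT2 r, if_neg h0]
          by_cases hm : f ξ = r.1
          · have hmm : ξ ∈ f ⁻¹' {r.1} := hm
            rw [Set.indicator_of_mem hmm, if_pos hm, smul_eq_mul, mul_one]
          · have hmm : ξ ∉ f ⁻¹' {r.1} := fun hc => hm hc
            rw [Set.indicator_of_notMem hmm, if_neg hm, smul_eq_mul, mul_zero]
      rw [Finset.sum_apply]
      symm
      calc (∑ r ∈ V.attach, (r.1 • Set.indicator (Oset F (T r)) fun _ => (1 : R)) ξ)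
          = ∑ r ∈ V.attach, (if f ξ = r.1 then r.1 else 0) :=
            Finset.sum_congr rfl (fun r _ => hterm r)
        _ = ∑ r ∈ V, (if f ξ = r then r else 0) :=
              Finset.sum_attach V (fun r => if f ξ = r then r else 0)
        _ = if f ξ ∈ V then f ξ else 0 := Finset.sum_ite_eq V (f ξ) (fun r => r)
        _ = f ξ := by
            by_cases hmem : f ξ ∈ V
            · rw [if_pos hmem]
            · rw [if_neg hmem]
              by_contra hne0
              have hξs : ξ ∈ tsupport f := subset_tsupport f (fun h => hne0 h.symm)
              obtain ⟨r, hrV, hr⟩ := by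
                simpa only [Set.mem_iUnion, exists_prop] using hV hξs
              rw [Set.mem_preimage, Set.mem_singleton_iff] at hr
              exact hmem (hr ▸ hrV)
    rw [hrepr]
    refine Submodule.sum_mem _ (fun r _ => Submodule.smul_mem _ _ ?_)
    exact Submodule.subset_span ⟨T r, hT1 r, rfl⟩
  · have : f = 0 := funext fun ξ => absurd ⟨ξ⟩ hne
    rw [this]
    exact Submodule.zero_mem _

end StoneAlg

section StoneIso

variable {A : Type*} {F : Set (List A)} (R : Type*) [CommRing R]

theorem PsiFun_mem (f : ↥(LcSub R (UltraU F))) :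
    (fun x : ↥(SubshiftOf F) => (f : UltraU F → R) (etaU x)) ∈ DRsub F R := by
  have hf : IsLocallyConstant (f : UltraU F → R) ∧ HasCompactSupport (f : UltraU F → R) := f.2
  have hsp := lc_mem_span R (f : UltraU F → R) hf.1 hf.2
  refine Submodule.span_induction ?_ ?_ ?_ ?_ hsp
    (p := fun g _ => (fun x : ↥(SubshiftOf F) => g (etaU x)) ∈ DRsub F R)
  · rintro g ⟨S, hS, rfl⟩
    rw [comp_indicator R hS]
    exact chi_mem R hS
  · exact zero_mem (DRsub F R)
  · intro g₁ g₂ _ _ h1 h2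
    exact add_mem h1 h2
  · intro c g _ h1
    exact SMulMemClass.smul_mem c h1

/-- The map `Ψ : Lc(𝒰̂, R) → D̃_R(X)`, evaluation along principal ultrafilters. -/
noncomputable def PsiC (F : Set (List A)) (R : Type*) [CommRing R] :
    ↥(LcSub R (UltraU F)) → ↥(DRsub F R) :=
  fun f => ⟨fun x => (f : UltraU F → R) (etaU x), PsiFun_mem R f⟩

theorem PsiC_inj : Function.Injective (PsiC F R) := by
  intro f g h
  have h' : ∀ x : ↥(SubshiftOf F), (f : UltraU F → R) (etaU x) = (g : UltraU F → R) (etaU x) :=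
    fun x => congrFun (congrArg Subtype.val h) x
  apply Subtype.ext
  funext ξ
  by_contra hne
  have hf : IsLocallyConstant (f : UltraU F → R) ∧ HasCompactSupport (f : UltraU F → R) := f.2
  have hg : IsLocallyConstant (g : UltraU F → R) ∧ HasCompactSupport (g : UltraU F → R) := g.2
  have hop : IsOpen ((f : UltraU F → R) ⁻¹' {(f : UltraU F → R) ξ}
      ∩ (g : UltraU F → R) ⁻¹' {(g : UltraU F → R) ξ}) := (hf.1 _).inter (hg.1 _)
  obtain ⟨T, hT, hTm, hTs⟩ := exists_basic hop ξ ⟨rfl, rfl⟩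
  obtain ⟨x, hx⟩ := nonempty_of_mem_ultra hTm
  have hxX : x ∈ SubshiftOf F := InU_subset hT hx
  have hη : etaU (⟨x, hxX⟩ : ↥(SubshiftOf F)) ∈ Oset F T := ⟨hT, hx⟩
  obtain ⟨e1, e2⟩ := hTs hη
  rw [Set.mem_preimage, Set.mem_singleton_iff] at e1 e2
  exact hne (e1 ▸ e2 ▸ h' ⟨x, hxX⟩)

theorem PsiC_surj : Function.Surjective (PsiC F R) := by
  rintro ⟨g, hg⟩
  have key : ∃ f : ↥(LcSub R (UltraU F)),
      (fun x : ↥(SubshiftOf F) => (f : UltraU F → R) (etaU x)) = g := by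
    refine NonUnitalAlgebra.adjoin_induction ?_ ?_ ?_ ?_ ?_ hg
      (p := fun g _ => ∃ f : ↥(LcSub R (UltraU F)),
        (fun x : ↥(SubshiftOf F) => (f : UltraU F → R) (etaU x)) = g)
    · rintro g ⟨α, hα, β, hβ, rfl⟩
      have hC : InU F (Cset F α β) := InU.base hα hβ
      refine ⟨⟨Set.indicator (Oset F (Cset F α β)) (fun _ => (1 : R)),
        indicator_mem_LcSub R (isClopen_Oset hC) (isCompact_Oset hC)⟩, ?_⟩
      exact comp_indicator R hC
    · rintro g₁ g₂ _ _ ⟨f₁, h₁⟩ ⟨f₂, h₂⟩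
      exact ⟨f₁ + f₂, by rw [← h₁, ← h₂]; rfl⟩
    · exact ⟨0, rfl⟩
    · rintro g₁ g₂ _ _ ⟨f₁, h₁⟩ ⟨f₂, h₂⟩
      exact ⟨f₁ * f₂, by rw [← h₁, ← h₂]; rfl⟩
    · rintro c g₁ _ ⟨f₁, h₁⟩
      exact ⟨c • f₁, by rw [← h₁]; rfl⟩
  obtain ⟨f, hfg⟩ := key
  exact ⟨f, Subtype.ext hfg⟩

/-- `Ψ` as an equivalence. -/
noncomputable def PsiEquiv (F : Set (List A)) (R : Type*) [CommRing R] :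
    ↥(LcSub R (UltraU F)) ≃ ↥(DRsub F R) :=
  Equiv.ofBijective (PsiC F R) ⟨PsiC_inj R, PsiC_surj R⟩

theorem PsiEquiv_add (a b : ↥(LcSub R (UltraU F))) :
    PsiEquiv F R (a + b) = PsiEquiv F R a + PsiEquiv F R b := Subtype.ext rfl

theorem PsiEquiv_mul (a b : ↥(LcSub R (UltraU F))) :
    PsiEquiv F R (a * b) = PsiEquiv F R a * PsiEquiv F R b := Subtype.ext rfl

theorem PsiEquiv_smul (c : R) (a : ↥(LcSub R (UltraU F))) :
    PsiEquiv F R (c • a) = c • PsiEquiv F R a := Subtype.ext rfl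

theorem PsiEquiv_zero : PsiEquiv F R (0 : ↥(LcSub R (UltraU F))) = 0 := Subtype.ext rfl

set_option maxHeartbeats 1000000 in
set_option synthInstance.maxHeartbeats 400000 in
/-- The isomorphism `Φ : D̃_R(X) → Lc(𝒰̂, R)`. -/
noncomputable def PhiHom (F : Set (List A)) (R : Type*) [CommRing R] :
    ↥(DRsub F R) →ₙₐ[R] ↥(LcSub R (UltraU F)) where
  toFun := (PsiEquiv F R).symm
  map_add' := fun a b => by
    apply (PsiEquiv F R).injective
    rw [Equiv.apply_symm_apply, PsiEquiv_add, Equiv.apply_symm_apply, Equiv.apply_symm_apply]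
  map_mul' := fun a b => by
    apply (PsiEquiv F R).injective
    rw [Equiv.apply_symm_apply, PsiEquiv_mul, Equiv.apply_symm_apply, Equiv.apply_symm_apply]
  map_smul' := fun c a => by
    apply (PsiEquiv F R).injective
    rw [Equiv.apply_symm_apply, PsiEquiv_smul, Equiv.apply_symm_apply]
    rfl
  map_zero' := by
    apply (PsiEquiv F R).injective
    rw [Equiv.apply_symm_apply, PsiEquiv_zero]

end StoneIso


theorem DRX_iso_Lc_of_stone_dual {A : Type*} (F : Set (List A)) (R : Type*) [CommRing R] :
    (∀ S : Set (ℕ → A), InU F S → chi F R S ∈ DRsub F R) ∧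
    ∃ Φ : ↥(DRsub F R) →ₙₐ[R] ↥(LcSub R (UltraU F)),
      Function.Bijective Φ ∧
      ∀ (S : Set (ℕ → A)) (_ : InU F S) (hm : chi F R S ∈ DRsub F R),
        (↑(Φ ⟨chi F R S, hm⟩) : UltraU F → R) = Set.indicator (Oset F S) fun _ => 1 := by
  constructor
  · intro S hS
    exact chi_mem R hS
  · refine ⟨PhiHom F R, ?_, ?_⟩
    · have hco : ⇑(PhiHom F R) = ⇑(PsiEquiv F R).symm := rfl
      rw [hco]
      exact (PsiEquiv F R).symm.bijective
    · intro S hS hm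
      have key : PsiEquiv F R ⟨Set.indicator (Oset F S) (fun _ => (1 : R)),
          indicator_mem_LcSub R (isClopen_Oset hS) (isCompact_Oset hS)⟩
            = ⟨chi F R S, hm⟩ := Subtype.ext (comp_indicator R hS)
      have hco : ⇑(PhiHom F R) = ⇑(PsiEquiv F R).symm := rfl
      have heq : PhiHom F R ⟨chi F R S, hm⟩
          = (⟨Set.indicator (Oset F S) (fun _ => (1 : R)),
            indicator_mem_LcSub R (isClopen_Oset hS) (isCompact_Oset hS)⟩ :
              ↥(LcSub R (UltraU F))) := by
        rw [hco, ← key, Equiv.symm_apply_apply]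
      rw [heq]
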